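/- Let K ⊆ L• be a knowledge base each of whose members is in normal form. Then for every ranked model R of K, R*_K ⪯_LM R. -/

import Mathlib

attribute [local instance] Classical.propDecidable

universe u

/-- Sentences of Propositional Typicality Logic over atoms `P`. -/
inductive PTL (P : Type u) : Type u
  | atom : P → PTL P
  | neg  : PTL P → PTL P
  | conj : PTL P → PTL P → PTL P
  | top  : PTL P
  | bot  : PTL P
  | typ  : PTL P → PTL P

namespace PTL

/-- Material implication, defined from `¬` and `∧`. -/
def impl {P : Type u} (a b : PTL P) : PTL P := neg (conj a (neg b))

/-- Disjunction, defined from `¬` and `∧`. -/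
def disj {P : Type u} (a b : PTL P) : PTL P := neg (conj (neg a) (neg b))

/-- Purely propositional sentences: no occurrence of the typicality operator. -/
def IsProp {P : Type u} : PTL P → Prop
  | atom _ => True
  | neg a => IsProp a
  | conj a b => IsProp a ∧ IsProp b
  | top => True
  | bot => True
  | typ _ => False

end PTL

/-- Propositional valuations. -/
abbrev Val (P : Type u) := P → Bool

/-- Satisfaction of a PTL sentence by a valuation, relative to a ranking
function `rho : Val P → ℕ∞`. -/
def satR {P : Type u} (rho : Val P → ℕ∞) : Val P → PTL P → Prop
  | v, PTL.atom p => v p = true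
  | v, PTL.neg a => ¬ satR rho v a
  | v, PTL.conj a b => satR rho v a ∧ satR rho v b
  | _, PTL.top => True
  | _, PTL.bot => False
  | v, PTL.typ a => satR rho v a ∧ ∀ v', rho v' < rho v → ¬ satR rho v' a

/-- The convexity property of ranking functions. -/
def RkConvex {P : Type u} (rho : Val P → ℕ∞) : Prop :=
  ∀ (v : Val P) (i : ℕ), rho v = (i : ℕ∞) → ∀ j : ℕ, j < i → ∃ v', rho v' = (j : ℕ∞)

/-- A ranked interpretation: a convex ranking function on valuations. -/
structure RankedInterp (P : Type u) where
  rk : Val P → ℕ∞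
  convex : RkConvex rk

/-- `rho` is a ranked model of `a`: every possible valuation satisfies `a`. -/
def modelsR {P : Type u} (rho : Val P → ℕ∞) (a : PTL P) : Prop :=
  ∀ v, rho v < ⊤ → satR rho v a

/-- `R ⊨ a`. -/
def RankedInterp.models {P : Type u} (R : RankedInterp P) (a : PTL P) : Prop :=
  modelsR R.rk a

/-- `R` is a ranked model of the knowledge base `K`. -/
def modelsSet {P : Type u} (R : RankedInterp P) (K : Set (PTL P)) : Prop :=
  ∀ a ∈ K, R.models a

/-- Ranked entailment consequences of `K`. -/
def Cn0 {P : Type u} (K : Set (PTL P)) : Set (PTL P) :=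
  {a | ∀ R : RankedInterp P, modelsSet R K → R.models a}

/-- Conjunction of a list of sentences (empty conjunction is `⊤`). -/
def bigConj {P : Type u} : List (PTL P) → PTL P
  | [] => PTL.top
  | a :: l => PTL.conj a (bigConj l)

/-- Disjunction of a list of sentences (empty disjunction is `⊥`). -/
def bigDisj {P : Type u} : List (PTL P) → PTL P
  | [] => PTL.bot
  | a :: l => PTL.disj a (bigDisj l)

/-- `a` is in normal form: `⋀_{i≤t} •θᵢ → (φ ∨ ⋁_{i≤s} •ψᵢ)` with all the
`θᵢ`, `φ`, `ψᵢ` purely propositional. -/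
def InNormalForm {P : Type u} (a : PTL P) : Prop :=
  ∃ (ths : List (PTL P)) (phi : PTL P) (pss : List (PTL P)),
    (∀ t ∈ ths, t.IsProp) ∧ phi.IsProp ∧ (∀ s ∈ pss, s.IsProp) ∧
    a = PTL.impl (bigConj (ths.map PTL.typ)) (PTL.disj phi (bigDisj (pss.map PTL.typ)))

/-- `R^1_S`: increase by one the rank of every valuation not in `S`. -/
noncomputable def bump {P : Type u} (rho : Val P → ℕ∞) (S : Set (Val P)) : Val P → ℕ∞ :=
  fun v => if v ∈ S then rho v else rho v + 1

/-- `R^∞_S`: make every valuation not in `S` impossible. -/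
noncomputable def toInf {P : Type u} (rho : Val P → ℕ∞) (S : Set (Val P)) : Val P → ℕ∞ :=
  fun v => if v ∈ S then rho v else ⊤

/-- `⟦K⟧_rho`: the possible valuations satisfying every member of `K`. -/
def KExt {P : Type u} (K : Set (PTL P)) (rho : Val P → ℕ∞) : Set (Val P) :=
  {v | rho v < ⊤ ∧ ∀ a ∈ K, satR rho v a}

/-- The sequence `R_i` of the LM-minimal construction. -/
noncomputable def Rseq {P : Type u} (K : Set (PTL P)) : ℕ → Val P → ℕ∞
  | 0 => fun _ => 0
  | i + 1 => bump (Rseq K i) (KExt K (Rseq K i))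

/-- The sequence `S_i` of the LM-minimal construction:
`S_0 = ∅`, `S_{i+1} = ⟦K⟧_{R_i}`. -/
noncomputable def Sseq {P : Type u} (K : Set (PTL P)) : ℕ → Set (Val P)
  | 0 => ∅
  | i + 1 => KExt K (Rseq K i)

/-- The least `i ≥ 1` with `S_i = S_{i-1}`. -/
noncomputable def stopIdx {P : Type u} (K : Set (PTL P)) : ℕ :=
  sInf {i : ℕ | 1 ≤ i ∧ Sseq K i = Sseq K (i - 1)}

/-- The LM-minimal ranked interpretation `R*_K := (R_{i-1})^∞_{S_i}`. -/
noncomputable def Rstar {P : Type u} (K : Set (PTL P)) : Val P → ℕ∞ :=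
  toInf (Rseq K (stopIdx K - 1)) (Sseq K (stopIdx K))

/-- The cell of rank `i` of a ranking function. -/
def cell {P : Type u} (rho : Val P → ℕ∞) (i : ℕ∞) : Set (Val P) :=
  {u | rho u = i}

/-- The LM preference `⪯_LM` on ranking functions: either all cells coincide,
or the cell of the first differing (finite) rank shrinks. -/
def LMle {P : Type u} (rho1 rho2 : Val P → ℕ∞) : Prop :=
  (∀ i : ℕ∞, cell rho1 i = cell rho2 i) ∨
  ∃ j : ℕ, (∀ k : ℕ, k < j → cell rho1 (k : ℕ∞) = cell rho2 (k : ℕ∞)) ∧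
    cell rho1 (j : ℕ∞) ≠ cell rho2 (j : ℕ∞) ∧ cell rho2 (j : ℕ∞) ⊆ cell rho1 (j : ℕ∞)

/-- Strict LM preference. -/
def LMlt {P : Type u} (rho1 rho2 : Val P → ℕ∞) : Prop :=
  LMle rho1 rho2 ∧ ¬ LMle rho2 rho1

section Aux

open PTL

variable {P : Type u}

lemma satR_prop_congr (rho rho' : Val P → ℕ∞) (v : Val P) :
    ∀ a : PTL P, a.IsProp → (satR rho v a ↔ satR rho' v a) := by
  intro a
  induction a with
  | atom p => intro _; simp [satR]
  | neg a ih => intro h; simp only [satR]; exact not_congr (ih h)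
  | conj a b iha ihb =>
      intro h; simp only [satR]; exact and_congr (iha h.1) (ihb h.2)
  | top => intro _; simp [satR]
  | bot => intro _; simp [satR]
  | typ a ih => intro h; exact h.elim

lemma satR_typ (rho : Val P → ℕ∞) (v : Val P) (a : PTL P) :
    satR rho v (PTL.typ a) ↔
      satR rho v a ∧ ∀ u, rho u < rho v → ¬ satR rho u a := Iff.rfl

lemma satR_impl (rho : Val P → ℕ∞) (v : Val P) (a b : PTL P) :
    satR rho v (PTL.impl a b) ↔ (satR rho v a → satR rho v b) := by
  simp only [PTL.impl, satR]; tauto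

lemma satR_disj (rho : Val P → ℕ∞) (v : Val P) (a b : PTL P) :
    satR rho v (PTL.disj a b) ↔ (satR rho v a ∨ satR rho v b) := by
  simp only [PTL.disj, satR]; tauto

lemma satR_bigConj (rho : Val P → ℕ∞) (v : Val P) (l : List (PTL P)) :
    satR rho v (bigConj l) ↔ ∀ a ∈ l, satR rho v a := by
  induction l with
  | nil => simp [bigConj, satR]
  | cons a l ih => simp [bigConj, satR, ih]

lemma satR_bigDisj (rho : Val P → ℕ∞) (v : Val P) (l : List (PTL P)) :
    satR rho v (bigDisj l) ↔ ∃ a ∈ l, satR rho v a := by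
  induction l with
  | nil => simp [bigDisj, satR]
  | cons a l ih => simp [bigDisj, satR_disj, ih]

lemma satR_order_iso (rho rho' : Val P → ℕ∞)
    (h : ∀ u w, rho u < rho w ↔ rho' u < rho' w) :
    ∀ (a : PTL P) (v : Val P), satR rho v a ↔ satR rho' v a := by
  intro a
  induction a with
  | atom p => intro v; simp [satR]
  | neg a ih => intro v; simp only [satR]; exact not_congr (ih v)
  | conj a b iha ihb => intro v; simp only [satR]; exact and_congr (iha v) (ihb v)
  | top => intro v; simp [satR]
  | bot => intro v; simp [satR]
  | typ a ih =>
      intro v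
      simp only [satR]
      constructor
      · rintro ⟨h1, h2⟩
        exact ⟨(ih v).1 h1, fun u hu hs => h2 u ((h u v).2 hu) ((ih u).2 hs)⟩
      · rintro ⟨h1, h2⟩
        exact ⟨(ih v).2 h1, fun u hu hs => h2 u ((h u v).1 hu) ((ih u).1 hs)⟩

variable (K : Set (PTL P))

lemma bump_le (rho : Val P → ℕ∞) (S : Set (Val P)) (u : Val P) :
    rho u ≤ bump rho S u := by
  unfold bump; split
  · exact le_rfl
  · exact le_self_add

lemma Rseq_le (i : ℕ) (v : Val P) : Rseq K i v ≤ (i : ℕ∞) := by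
  induction i with
  | zero => simp [Rseq]
  | succ i ih =>
      show bump (Rseq K i) _ v ≤ ((i+1 : ℕ) : ℕ∞)
      unfold bump; split
      · exact le_trans ih (by exact_mod_cast Nat.le_succ i)
      · calc Rseq K i v + 1 ≤ (i : ℕ∞) + 1 := add_le_add ih le_rfl
          _ = ((i+1 : ℕ) : ℕ∞) := by push_cast; ring

lemma Rseq_lt_top (i : ℕ) (v : Val P) : Rseq K i v < ⊤ :=
  lt_of_le_of_lt (Rseq_le K i v) (by exact_mod_cast WithTop.coe_lt_top i)

end Aux
section Aux2

open PTL

variable {P : Type u} (K : Set (PTL P))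

lemma Sseq_succ (i : ℕ) : Sseq K (i+1) = KExt K (Rseq K i) := rfl

lemma Rseq_succ (i : ℕ) : Rseq K (i+1) = bump (Rseq K i) (Sseq K (i+1)) := rfl

lemma mem_KExt {rho : Val P → ℕ∞} {v : Val P} :
    v ∈ KExt K rho ↔ rho v < ⊤ ∧ ∀ a ∈ K, satR rho v a := Iff.rfl

variable (hK : ∀ a ∈ K, InNormalForm a)
include hK

/-- The semantic core: if every valuation outside `S_{i+1}` has rank `i`
under `R_i`, then `S_{i+1} ⊆ S_{i+2}`. -/
lemma mono_step (i : ℕ)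
    (hTop : ∀ v, v ∉ Sseq K (i+1) → Rseq K i v = (i : ℕ∞)) :
    Sseq K (i+1) ⊆ Sseq K (i+2) := by
  intro v hv
  set rho := Rseq K i with hrho
  have hvK : v ∈ KExt K rho := hv
  have hbv : Rseq K (i+1) v = rho v := by
    rw [Rseq_succ]; unfold bump; exact if_pos hv
  rw [Sseq_succ, mem_KExt]
  refine ⟨by rw [hbv]; exact Rseq_lt_top K i v, ?_⟩
  intro a ha
  obtain ⟨ths, φ, pss, hths, hφ, hpss, rfl⟩ := hK a ha
  rw [satR_impl]
  intro hant
  rw [satR_bigConj] at hant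
  -- transfer the antecedent down to rho
  have hant' : ∀ θ ∈ ths, satR rho v (PTL.typ θ) := by
    intro θ hθ
    have h1 := hant (PTL.typ θ) (List.mem_map_of_mem (f := PTL.typ) hθ)
    rw [satR_typ] at h1
    obtain ⟨hs, hmin⟩ := h1
    rw [satR_typ]
    refine ⟨(satR_prop_congr _ rho v θ (hths θ hθ)).1 hs, ?_⟩
    intro u hu hsu
    by_cases huS : u ∈ Sseq K (i+1)
    · have hbu : Rseq K (i+1) u = rho u := by
        rw [Rseq_succ]; unfold bump; exact if_pos huS
      exact hmin u (by rw [hbu, hbv]; exact hu)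
        ((satR_prop_congr rho _ u θ (hths θ hθ)).1 hsu)
    · have := hTop u huS
      have hvle : rho v ≤ (i : ℕ∞) := Rseq_le K i v
      rw [this] at hu
      exact absurd (lt_of_lt_of_le hu hvle) (lt_irrefl _)
  -- v satisfies a under rho
  have hva := hvK.2 _ ha
  rw [satR_impl] at hva
  have hcons := hva (by rw [satR_bigConj]; intro b hb
                        obtain ⟨θ, hθ, rfl⟩ := List.mem_map.1 hb
                        exact hant' θ hθ)
  rw [satR_disj] at hcons
  rw [satR_disj]
  rcases hcons with hφc | hdis
  · exact Or.inl ((satR_prop_congr rho _ v φ hφ).1 hφc)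
  · right
    rw [satR_bigDisj] at hdis ⊢
    obtain ⟨b, hb, hsb⟩ := hdis
    obtain ⟨ψ, hψ, rfl⟩ := List.mem_map.1 hb
    refine ⟨PTL.typ ψ, List.mem_map_of_mem (f := PTL.typ) hψ, ?_⟩
    rw [satR_typ] at hsb ⊢
    obtain ⟨hs, hmin⟩ := hsb
    refine ⟨(satR_prop_congr rho _ v ψ (hpss ψ hψ)).1 hs, ?_⟩
    intro u hu hsu
    have h1 : rho u ≤ Rseq K (i+1) u := by rw [Rseq_succ]; exact bump_le _ _ u
    rw [hbv] at hu
    exact hmin u (lt_of_le_of_lt h1 hu)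
      ((satR_prop_congr _ rho u ψ (hpss ψ hψ)).1 hsu)

lemma mono_notIn : ∀ i : ℕ, (Sseq K i ⊆ Sseq K (i+1)) ∧
    (∀ v, v ∉ Sseq K i → Rseq K i v = (i : ℕ∞)) := by
  intro i
  induction i with
  | zero =>
      constructor
      · intro v hv; exact absurd hv (by simp [Sseq])
      · intro v _; simp [Rseq]
  | succ i ih =>
      have hTop : ∀ v, v ∉ Sseq K (i+1) → Rseq K i v = (i : ℕ∞) := by
        intro v hv
        exact ih.2 v (fun h => hv (ih.1 h))
      constructor
      · exact mono_step K hK i hTop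
      · intro v hv
        have h1 : v ∉ Sseq K (i+1) := hv
        have h2 : Rseq K i v = (i : ℕ∞) := hTop v h1
        rw [Rseq_succ]
        unfold bump
        rw [if_neg h1, h2]
        push_cast; ring

lemma Sseq_mono {i j : ℕ} (h : i ≤ j) : Sseq K i ⊆ Sseq K j := by
  induction j with
  | zero => rw [Nat.le_zero.1 h]
  | succ j ih =>
      rcases Nat.lt_or_ge i (j+1) with h1 | h1
      · exact subset_trans (ih (Nat.lt_succ_iff.1 h1)) (mono_notIn K hK j).1
      · rw [Nat.le_antisymm h h1]

lemma notIn_rank {i : ℕ} {v : Val P} (h : v ∉ Sseq K i) :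
    Rseq K i v = (i : ℕ∞) := (mono_notIn K hK i).2 v h

lemma frozen {i : ℕ} {v : Val P} (h : v ∈ Sseq K (i+1)) :
    ∀ j, i ≤ j → Rseq K j v = Rseq K i v := by
  intro j hj
  obtain ⟨d, rfl⟩ := Nat.exists_eq_add_of_le hj
  clear hj
  induction d with
  | zero => rfl
  | succ d ihd =>
      have hmem : v ∈ Sseq K (i + d + 1) :=
        Sseq_mono K hK (by omega) h
      have : Rseq K (i + (d+1)) v = Rseq K (i + d) v := by
        show Rseq K ((i + d) + 1) v = _
        rw [Rseq_succ]; unfold bump; exact if_pos hmem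
      rw [this, ihd]

lemma entry_rank {k : ℕ} {v : Val P} (h1 : v ∈ Sseq K (k+1))
    (h2 : v ∉ Sseq K k) : ∀ j, k ≤ j → Rseq K j v = (k : ℕ∞) := by
  intro j hj
  rw [frozen K hK h1 j hj, notIn_rank K hK h2]

lemma in_rank_le {j : ℕ} {v : Val P} (h : v ∈ Sseq K (j+1)) :
    Rseq K (j+1) v ≤ (j : ℕ∞) := by
  have : Rseq K (j+1) v = Rseq K j v := by
    rw [Rseq_succ]; unfold bump; exact if_pos h
  rw [this]; exact Rseq_le K j v

lemma exists_entry {i : ℕ} {v : Val P} (h : v ∈ Sseq K (i+1)) :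
    ∃ k ≤ i, v ∈ Sseq K (k+1) ∧ v ∉ Sseq K k := by
  classical
  have hex : ∃ m, v ∈ Sseq K (m+1) := ⟨i, h⟩
  refine ⟨Nat.find hex, ?_, Nat.find_spec hex, ?_⟩
  · by_contra hlt
    push_neg at hlt
    exact absurd h (fun hmem => Nat.find_min hex (m := i) hlt hmem)
  · intro hmem
    rcases Nat.eq_zero_or_pos (Nat.find hex) with h0 | h0
    · rw [h0] at hmem; exact absurd hmem (by simp [Sseq])
    · have : v ∈ Sseq K ((Nat.find hex - 1) + 1) := by
        have : (Nat.find hex - 1) + 1 = Nat.find hex := by omega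
        rw [this]; exact hmem
      exact Nat.find_min hex (by omega) this

end Aux2
section Aux3

open PTL

variable {P : Type u} (K : Set (PTL P)) (hK : ∀ a ∈ K, InNormalForm a)
include hK

/-- Once the sequence of sets stabilises, it stays stable. -/
lemma fix_step (i : ℕ) (h : Sseq K (i+1) = Sseq K i) :
    Sseq K (i+2) = Sseq K (i+1) := by
  have hout : ∀ w, w ∉ Sseq K (i+1) →
      Rseq K i w = (i : ℕ∞) ∧ Rseq K (i+1) w = ((i+1 : ℕ) : ℕ∞) := by
    intro w hw
    have h1 : Rseq K i w = (i : ℕ∞) := by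
      apply notIn_rank K hK
      intro hmem; exact hw (Sseq_mono K hK (Nat.le_succ i) hmem)
    refine ⟨h1, ?_⟩
    rw [Rseq_succ]; unfold bump; rw [if_neg hw, h1]; push_cast; ring
  have hin : ∀ w, w ∈ Sseq K (i+1) →
      Rseq K (i+1) w = Rseq K i w ∧ Rseq K i w < (i : ℕ∞) := by
    intro w hw
    have h1 : Rseq K (i+1) w = Rseq K i w := by
      rw [Rseq_succ]; unfold bump; exact if_pos hw
    refine ⟨h1, ?_⟩
    rcases Nat.eq_zero_or_pos i with h0 | h0
    · subst h0
      rw [h] at hw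
      exact absurd hw (by simp [Sseq])
    · obtain ⟨j, rfl⟩ := Nat.exists_eq_add_of_le h0
      have hw' : w ∈ Sseq K (j + 1) := by
        rw [show j + 1 = 1 + j by omega, ← h]
        exact Sseq_mono K hK (by omega) hw
      have h2 := in_rank_le K hK (j := j) hw'
      calc Rseq K (1 + j) w = Rseq K (j + 1) w := by rw [Nat.add_comm]
        _ ≤ (j : ℕ∞) := h2
        _ < ((1 + j : ℕ) : ℕ∞) := by exact_mod_cast by omega
  have hiso : ∀ u w, Rseq K i u < Rseq K i w ↔ Rseq K (i+1) u < Rseq K (i+1) w := by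
    intro u w
    by_cases hu : u ∈ Sseq K (i+1) <;> by_cases hw : w ∈ Sseq K (i+1)
    · rw [(hin u hu).1, (hin w hw).1]
    · have h1 := (hin u hu).2
      have h2 := (hout w hw).1
      have h3 := (hout w hw).2
      rw [(hin u hu).1, h2, h3]
      constructor
      · intro _
        exact lt_of_lt_of_le h1 (by exact_mod_cast Nat.le_succ i)
      · intro _; exact h1
    · have h1 := (hout u hu)
      have h2 := (hin w hw).2
      rw [h1.1, h1.2, (hin w hw).1]
      constructor
      · intro hc; exact absurd (lt_trans hc h2) (lt_irrefl _)
      · intro hc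
        have : ((i+1 : ℕ) : ℕ∞) < (i : ℕ∞) := lt_trans hc h2
        exact absurd (by exact_mod_cast this) (by omega)
    · rw [(hout u hu).1, (hout u hu).2, (hout w hw).1, (hout w hw).2]
      simp
  have : KExt K (Rseq K (i+1)) = KExt K (Rseq K i) := by
    ext w
    rw [mem_KExt, mem_KExt]
    constructor
    · rintro ⟨_, h2⟩
      exact ⟨Rseq_lt_top K i w, fun a ha =>
        (satR_order_iso _ _ hiso a w).2 (h2 a ha)⟩
    · rintro ⟨_, h2⟩
      exact ⟨Rseq_lt_top K (i+1) w, fun a ha =>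
        (satR_order_iso _ _ hiso a w).1 (h2 a ha)⟩
  show KExt K (Rseq K (i+1)) = Sseq K (i+1)
  rw [this]; rfl

lemma stab_of_fix {p : ℕ} (h : Sseq K (p+1) = Sseq K p) :
    ∀ m, p ≤ m → Sseq K m = Sseq K p := by
  have main : ∀ d, Sseq K (p+d+1) = Sseq K (p+d) ∧ Sseq K (p+d) = Sseq K p := by
    intro d
    induction d with
    | zero => exact ⟨h, rfl⟩
    | succ d ihd =>
        refine ⟨?_, ihd.1.trans ihd.2⟩
        have := fix_step K hK (p+d) ihd.1
        rw [show p + (d+1) + 1 = p + d + 2 by omega, show p + (d+1) = p + d + 1 by omega]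
        exact this
  intro m hm
  obtain ⟨d, rfl⟩ := Nat.exists_eq_add_of_le hm
  exact (main d).2

end Aux3
section Aux4

open PTL

variable {P : Type u} [Fintype P] [DecidableEq P]
variable (K : Set (PTL P)) (hK : ∀ a ∈ K, InNormalForm a)
include hK

lemma stop_nonempty : {i : ℕ | 1 ≤ i ∧ Sseq K i = Sseq K (i - 1)}.Nonempty := by
  by_contra hne
  rw [Set.not_nonempty_iff_eq_empty] at hne
  have hneq : ∀ i : ℕ, 1 ≤ i → Sseq K i ≠ Sseq K (i-1) := by
    intro i hi hcontra
    have : i ∈ {i : ℕ | 1 ≤ i ∧ Sseq K i = Sseq K (i - 1)} := ⟨hi, hcontra⟩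
    rw [hne] at this
    exact this
  have hcard : ∀ i : ℕ, i ≤ (Sseq K i).ncard := by
    intro i
    induction i with
    | zero => omega
    | succ i ih =>
        have hss : Sseq K i ⊂ Sseq K (i+1) := by
          refine ⟨Sseq_mono K hK (Nat.le_succ i), ?_⟩
          intro hsub
          exact hneq (i+1) (by omega)
            (by simp only [Nat.add_sub_cancel]
                exact le_antisymm hsub (Sseq_mono K hK (Nat.le_succ i)))
        have := Set.ncard_lt_ncard hss (Set.toFinite _)
        omega
  have h1 := hcard (Fintype.card (Val P) + 1)
  have h2 : (Sseq K (Fintype.card (Val P) + 1)).ncard ≤ Fintype.card (Val P) := by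
    have := Set.ncard_le_ncard (Set.subset_univ (Sseq K (Fintype.card (Val P) + 1)))
      (Set.toFinite _)
    rwa [Set.ncard_univ, Nat.card_eq_fintype_card] at this
  omega

lemma stop_spec : 1 ≤ stopIdx K ∧ Sseq K (stopIdx K) = Sseq K (stopIdx K - 1) :=
  Nat.sInf_mem (stop_nonempty K hK)

lemma stab : ∀ m, stopIdx K ≤ m → Sseq K m = Sseq K (stopIdx K) := by
  obtain ⟨h1, h2⟩ := stop_spec K hK
  obtain ⟨p, hp⟩ := Nat.exists_eq_add_of_le h1
  have hp' : stopIdx K = p + 1 := by omega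
  rw [hp']
  rw [hp', Nat.add_sub_cancel] at h2
  intro m hm
  exact (stab_of_fix K hK h2 m (by omega)).trans h2.symm

lemma Rstar_eq_coe_iff (k : ℕ) (v : Val P) :
    Rstar K v = (k : ℕ∞) ↔ v ∈ Sseq K (k+1) ∧ v ∉ Sseq K k := by
  obtain ⟨h1, h2⟩ := stop_spec K hK
  set n := stopIdx K with hn
  constructor
  · intro h
    have hvS : v ∈ Sseq K n := by
      by_contra hcon
      have : Rstar K v = ⊤ := by
        unfold Rstar toInf
        rw [if_neg (by rw [← hn]; exact hcon)]
      rw [this] at h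
      exact absurd h.symm (by simp)
    have hρ : Rseq K (n-1) v = (k : ℕ∞) := by
      unfold Rstar toInf at h
      rw [if_pos (by rw [← hn]; exact hvS)] at h
      exact h
    have hvS' : v ∈ Sseq K ((n-1)+1) := by
      rw [show (n-1)+1 = n by omega]; exact hvS
    obtain ⟨e, he, hmem, hnot⟩ := exists_entry K hK hvS'
    have := entry_rank K hK hmem hnot (n-1) he
    rw [hρ] at this
    have hek : e = k := by exact_mod_cast this.symm
    subst hek
    exact ⟨hmem, hnot⟩
  · rintro ⟨hmem, hnot⟩
    have hkn : k + 1 ≤ n := by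
      by_contra hc
      push_neg at hc
      have hSk : Sseq K k = Sseq K n := stab K hK k (by omega)
      have hSk1 : Sseq K (k+1) = Sseq K n := stab K hK (k+1) (by omega)
      rw [hSk1, ← hSk] at hmem
      exact hnot hmem
    have hvn : v ∈ Sseq K n := Sseq_mono K hK hkn hmem
    have : Rstar K v = Rseq K (n-1) v := by
      unfold Rstar toInf
      rw [if_pos (by rw [← hn]; exact hvn)]
    rw [this]
    exact entry_rank K hK hmem hnot (n-1) (by omega)

lemma Rstar_top_iff (v : Val P) :
    Rstar K v = ⊤ ↔ v ∉ Sseq K (stopIdx K) := by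
  obtain ⟨h1, _⟩ := stop_spec K hK
  constructor
  · intro h hmem
    have : Rstar K v = Rseq K (stopIdx K - 1) v := by
      unfold Rstar toInf; rw [if_pos hmem]
    rw [this] at h
    exact absurd h (ne_of_lt (Rseq_lt_top K _ v))
  · intro h
    unfold Rstar toInf; rw [if_neg h]

end Aux4
section Aux5

open PTL

lemma enat_eq_top_or_coe (x : ℕ∞) : x = ⊤ ∨ ∃ k : ℕ, x = (k : ℕ∞) := by
  induction x using ENat.recTopCoe with
  | top => exact Or.inl rfl
  | coe k => exact Or.inr ⟨k, rfl⟩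

lemma enat_lt_coe {x : ℕ∞} {j : ℕ} (h : x < (j : ℕ∞)) :
    ∃ k : ℕ, x = (k : ℕ∞) ∧ k < j := by
  rcases enat_eq_top_or_coe x with rfl | ⟨k, rfl⟩
  · exact absurd h (by simp)
  · exact ⟨k, rfl, by exact_mod_cast h⟩

variable {P : Type u} [Fintype P] [DecidableEq P]
variable (K : Set (PTL P)) (hK : ∀ a ∈ K, InNormalForm a)
include hK

lemma key_mem (R : RankedInterp P) (hR : modelsSet R K) (j : ℕ)
    (hcell : ∀ k, k < j → cell (Rstar K) (k : ℕ∞) = cell R.rk (k : ℕ∞))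
    (v : Val P) (hv : R.rk v = (j : ℕ∞)) : v ∈ Sseq K (j+1) := by
  by_contra hnotin
  have hnotj : v ∉ Sseq K j := fun h => hnotin (Sseq_mono K hK (Nat.le_succ j) h)
  have hrv : Rseq K j v = (j : ℕ∞) := notIn_rank K hK hnotj
  have hlow : ∀ (u : Val P) (k : ℕ), k < j →
      (Rseq K j u = (k : ℕ∞) ↔ R.rk u = (k : ℕ∞)) := by
    intro u k hkj
    have hstar : Rstar K u = (k : ℕ∞) ↔ Rseq K j u = (k : ℕ∞) := by
      rw [Rstar_eq_coe_iff K hK]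
      constructor
      · rintro ⟨hm, hn⟩; exact entry_rank K hK hm hn j (by omega)
      · intro hr
        have huj : u ∈ Sseq K j := by
          by_contra hc
          rw [notIn_rank K hK hc] at hr
          have : j = k := by exact_mod_cast hr
          omega
        obtain ⟨p, rfl⟩ : ∃ p, j = p + 1 := ⟨j - 1, by omega⟩
        obtain ⟨e, he, hm, hn⟩ := exists_entry K hK (i := p) huj
        have h2 := entry_rank K hK hm hn (p+1) (by omega)
        rw [hr] at h2
        have hek : e = k := by exact_mod_cast h2.symm
        subst hek; exact ⟨hm, hn⟩
    have hcc : Rstar K u = (k : ℕ∞) ↔ R.rk u = (k : ℕ∞) := by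
      constructor
      · intro h
        have hmem : u ∈ cell (Rstar K) (k : ℕ∞) := h
        rw [hcell k hkj] at hmem
        exact hmem
      · intro h
        have hmem : u ∈ cell R.rk (k : ℕ∞) := h
        rw [← hcell k hkj] at hmem
        exact hmem
    rw [← hstar, hcc]
  apply hnotin
  rw [Sseq_succ, mem_KExt]
  refine ⟨Rseq_lt_top K j v, ?_⟩
  intro a ha
  obtain ⟨ths, φ, pss, hths, hφ, hpss, rfl⟩ := hK a ha
  rw [satR_impl]
  intro hant
  rw [satR_bigConj] at hant
  have hantR : satR R.rk v (bigConj (ths.map PTL.typ)) := by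
    rw [satR_bigConj]
    intro b hb
    obtain ⟨θ, hθ, rfl⟩ := List.mem_map.1 hb
    have h1 := hant _ (List.mem_map_of_mem (f := PTL.typ) hθ)
    rw [satR_typ] at h1 ⊢
    refine ⟨(satR_prop_congr _ _ v θ (hths θ hθ)).1 h1.1, ?_⟩
    intro u hu hsu
    rw [hv] at hu
    obtain ⟨k, hk, hkj⟩ := enat_lt_coe hu
    have hru : Rseq K j u = (k : ℕ∞) := (hlow u k hkj).2 hk
    exact h1.2 u (by rw [hru, hrv]; exact_mod_cast hkj)
      ((satR_prop_congr _ _ u θ (hths θ hθ)).1 hsu)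
  have hαR := hR _ ha v (by rw [hv]; exact_mod_cast (WithTop.coe_lt_top j))
  rw [satR_impl] at hαR
  have hcons := hαR hantR
  rw [satR_disj] at hcons ⊢
  rcases hcons with hφc | hdis
  · exact Or.inl ((satR_prop_congr _ _ v φ hφ).1 hφc)
  · right
    rw [satR_bigDisj] at hdis ⊢
    obtain ⟨b, hb, hsb⟩ := hdis
    obtain ⟨ψ, hψ, rfl⟩ := List.mem_map.1 hb
    refine ⟨_, List.mem_map_of_mem (f := PTL.typ) hψ, ?_⟩
    rw [satR_typ] at hsb ⊢
    refine ⟨(satR_prop_congr _ _ v ψ (hpss ψ hψ)).1 hsb.1, ?_⟩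
    intro u hu hsu
    rw [hrv] at hu
    obtain ⟨k, hk, hkj⟩ := enat_lt_coe hu
    have hRu : R.rk u = (k : ℕ∞) := (hlow u k hkj).1 hk
    exact hsb.2 u (by rw [hRu, hv]; exact_mod_cast hkj)
      ((satR_prop_congr _ _ u ψ (hpss ψ hψ)).1 hsu)

end Aux5
/-- `R*_K` is LM-preferred to every ranked model of `K`. -/
theorem ptl_Rstar_LM_minimal {P : Type u} [Fintype P] [DecidableEq P]
    (K : Set (PTL P)) (hK : ∀ a ∈ K, InNormalForm a)
    (R : RankedInterp P) (hR : modelsSet R K) :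
    LMle (Rstar K) R.rk := by
  classical
  unfold LMle
  by_cases hD : ∀ j : ℕ, cell (Rstar K) (j : ℕ∞) = cell R.rk (j : ℕ∞)
  · left
    intro i
    induction i using ENat.recTopCoe with
    | top =>
        ext u
        simp only [cell, Set.mem_setOf_eq]
        constructor
        · intro h
          rcases enat_eq_top_or_coe (R.rk u) with h2 | ⟨k, hk⟩
          · exact h2
          · exfalso
            have hmem : u ∈ cell R.rk (k : ℕ∞) := hk
            rw [← hD k] at hmem
            have h3 : Rstar K u = (k : ℕ∞) := hmem
            rw [h] at h3
            exact absurd h3 (by simp)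
        · intro h
          rcases enat_eq_top_or_coe (Rstar K u) with h2 | ⟨k, hk⟩
          · exact h2
          · exfalso
            have hmem : u ∈ cell (Rstar K) (k : ℕ∞) := hk
            rw [hD k] at hmem
            have h3 : R.rk u = (k : ℕ∞) := hmem
            rw [h] at h3
            exact absurd h3 (by simp)
    | coe k => exact hD k
  · right
    push_neg at hD
    have hne : {j : ℕ | cell (Rstar K) (j : ℕ∞) ≠ cell R.rk (j : ℕ∞)}.Nonempty := hD
    set j := sInf {j : ℕ | cell (Rstar K) (j : ℕ∞) ≠ cell R.rk (j : ℕ∞)} with hj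
    have hjD : cell (Rstar K) (j : ℕ∞) ≠ cell R.rk (j : ℕ∞) := Nat.sInf_mem hne
    have hmin : ∀ k : ℕ, k < j → cell (Rstar K) (k : ℕ∞) = cell R.rk (k : ℕ∞) := by
      intro k hk
      by_contra hc
      have : j ≤ k := Nat.sInf_le hc
      omega
    refine ⟨j, hmin, hjD, ?_⟩
    intro v hv
    have hv' : R.rk v = (j : ℕ∞) := hv
    have hmem := key_mem K hK R hR j hmin v hv'
    obtain ⟨e, he, hm, hn⟩ := exists_entry K hK hmem
    have hstar : Rstar K v = (e : ℕ∞) := (Rstar_eq_coe_iff K hK e v).2 ⟨hm, hn⟩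
    have hej : e = j := by
      rcases Nat.lt_or_ge e j with hlt | hge
      · exfalso
        have h1 : v ∈ cell (Rstar K) (e : ℕ∞) := hstar
        rw [hmin e hlt] at h1
        have h2 : R.rk v = (e : ℕ∞) := h1
        rw [hv'] at h2
        have : j = e := by exact_mod_cast h2
        omega
      · omega
    show Rstar K v = (j : ℕ∞)
    rw [← hej]
    exact hstar
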